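/- Let x : ℝ → E be a continuously differentiable 1-periodic curve into a real inner product space E with zero mean, i.e. ∫₀¹ x(t) dt = 0. Then the L² norms satisfy ∫₀¹ ‖x(t)‖² dt ≤ (1/(2π))² · ∫₀¹ ‖x'(t)‖² dt. -/

import Mathlib

open Real MeasureTheory Set Function intervalIntegral AddCircle

attribute [local instance] ZeroLEOneClass.factZeroLtOne

noncomputable def wcoeff (g : ℝ → ℂ) (n : ℤ) : ℂ := fourierCoeffOn one_pos g n

-- periodic deriv
lemma periodic_deriv' {F : Type*} [NormedAddCommGroup F] [NormedSpace ℝ F]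
    (x : ℝ → F) (hper : Function.Periodic x 1) : Function.Periodic (deriv x) 1 := by
  intro t
  have h1 : (fun s => x (s + 1)) = x := funext fun s => hper s
  calc deriv x (t + 1) = deriv (fun s => x (s + 1)) t := (deriv_comp_add_const x 1 t).symm
  _ = deriv x t := by rw [h1]

lemma wcoeff_eq_liftIco (g : ℝ → ℂ) (n : ℤ) :
    fourierCoeff (AddCircle.liftIco 1 0 g) n = wcoeff g n := by
  have := fourierCoeff_liftIco_eq (T := 1) (a := 0) g n
  rw [wcoeff]
  simpa only [zero_add] using this

lemma wparseval (g : ℝ → ℂ) (hg : Continuous g) (hper : Function.Periodic g 1) :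
    Summable (fun n : ℤ => ‖wcoeff g n‖ ^ 2) ∧
      ∑' n : ℤ, ‖wcoeff g n‖ ^ 2 = ∫ t in (0:ℝ)..1, ‖g t‖ ^ 2 := by
  set G : C(AddCircle (1:ℝ), ℂ) :=
    ⟨AddCircle.liftIco 1 0 g,
      AddCircle.liftIco_continuous (by simpa using (hper 0).symm) hg.continuousOn⟩ with hG
  have hcoeff : ∀ n, fourierCoeff (⇑(ContinuousMap.toLp (E:=ℂ) 2 haarAddCircle ℂ G)) n = wcoeff g n := by
    intro n
    rw [fourierCoeff_toLp, ← wcoeff_eq_liftIco]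
    rfl
  constructor
  · have hmem := lp.memℓp (fourierBasis.repr (ContinuousMap.toLp (E:=ℂ) 2 haarAddCircle ℂ G))
    have hs := hmem.summable (by norm_num)
    simp_rw [fourierBasis_repr, hcoeff] at hs
    convert hs using 2 with n
    rw [← Real.rpow_natCast]
    norm_num
  · have key := tsum_sq_fourierCoeff (ContinuousMap.toLp (E:=ℂ) 2 haarAddCircle ℂ G)
    simp_rw [hcoeff] at key
    rw [key]
    -- now the integral side
    have hae : (ContinuousMap.toLp (E:=ℂ) 2 haarAddCircle ℂ G : Lp ℂ 2 haarAddCircle) =ᵐ[haarAddCircle] G :=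
      ContinuousMap.coeFn_toLp _ _
    have : ∫ t : AddCircle (1:ℝ), ‖(ContinuousMap.toLp (E:=ℂ) 2 haarAddCircle ℂ G : Lp ℂ 2 haarAddCircle) t‖ ^ 2 ∂haarAddCircle
        = ∫ t : AddCircle (1:ℝ), ‖G t‖ ^ 2 ∂haarAddCircle := by
      apply MeasureTheory.integral_congr_ae
      filter_upwards [hae] with t ht
      rw [ht]
    rw [this]
    have hmeas : (haarAddCircle : Measure (AddCircle (1:ℝ))) = volume := by
      rw [volume_eq_smul_haarAddCircle]
      simp
    rw [hmeas, ← AddCircle.intervalIntegral_preimage 1 0 (fun z => ‖G z‖ ^ 2)]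
    rw [zero_add]
    apply intervalIntegral.integral_congr_ae
    have h1 : ∀ᵐ t : ℝ, t ∈ Set.uIoc (0:ℝ) 1 → t ∈ Ioo (0:ℝ) 1 ∨ t = 1 := by
      refine Filter.Eventually.of_forall fun t ht => ?_
      rw [uIoc_of_le one_pos.le] at ht
      rcases eq_or_lt_of_le ht.2 with h | h
      · exact Or.inr h
      · exact Or.inl ⟨ht.1, h⟩
    filter_upwards [h1] with t ht hmem
    rcases ht hmem with h | h
    · have : (AddCircle.liftIco 1 0 g) ↑t = g t :=
        AddCircle.liftIco_coe_apply (by simp [h.1.le, h.2])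
      simp only [hG]
      rw [ContinuousMap.coe_mk, this]
    · subst h
      have h0 : ((1:ℝ) : AddCircle (1:ℝ)) = ((0:ℝ) : AddCircle (1:ℝ)) := by
        simpa using AddCircle.coe_add_period 1 0
      have : (AddCircle.liftIco 1 0 g) ↑(0:ℝ) = g 0 :=
        AddCircle.liftIco_coe_apply (by simp)
      simp only [hG, ContinuousMap.coe_mk, h0, this]
      rw [show g 0 = g 1 by simpa using (hper 0).symm]

lemma wcoeff_zero (g : ℝ → ℂ) : wcoeff g 0 = ∫ t in (0:ℝ)..1, g t := by
  rw [wcoeff, fourierCoeffOn_eq_integral]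
  simp [fourier_zero]

lemma wcoeff_deriv (g : ℝ → ℂ) (hg : ContDiff ℝ 1 g) (hper : Function.Periodic g 1)
    {n : ℤ} (hn : n ≠ 0) :
    wcoeff g n = 1 / (2 * π * Complex.I * n) * wcoeff (deriv g) n := by
  have hd : ∀ t, HasDerivAt g (deriv g t) t := fun t =>
    (hg.differentiable one_ne_zero).differentiableAt.hasDerivAt
  have hint : IntervalIntegrable (deriv g) volume 0 1 :=
    (hg.continuous_deriv le_rfl).intervalIntegrable _ _
  have key := fourierCoeffOn_of_hasDerivAt (one_pos : (0:ℝ) < 1) hn (fun t _ => hd t) hint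
  rw [show g 1 - g 0 = 0 by rw [show g 1 = g 0 by simpa using hper 0]; ring] at key
  rw [wcoeff, wcoeff, key]
  push_cast
  ring

lemma wirtinger_C (g : ℝ → ℂ) (hg : ContDiff ℝ 1 g) (hper : Function.Periodic g 1)
    (hmean : ∫ t in (0:ℝ)..1, g t = 0) :
    ∫ t in (0:ℝ)..1, ‖g t‖ ^ 2 ≤ (1 / (2 * π)) ^ 2 * ∫ t in (0:ℝ)..1, ‖deriv g t‖ ^ 2 := by
  have hper' : Function.Periodic (deriv g) 1 := periodic_deriv' g hper
  obtain ⟨hsum, hpar⟩ := wparseval g hg.continuous hper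
  obtain ⟨hsum', hpar'⟩ := wparseval (deriv g) (hg.continuous_deriv le_rfl) hper'
  rw [← hpar, ← hpar']
  rw [← tsum_mul_left]
  refine Summable.tsum_le_tsum (fun n => ?_) hsum (hsum'.mul_left _)
  rcases eq_or_ne n 0 with rfl | hn
  · rw [wcoeff_zero g, hmean]
    simp only [norm_zero, ne_eq, OfNat.ofNat_ne_zero, not_false_eq_true, zero_pow]
    positivity
  · rw [wcoeff_deriv g hg hper hn, norm_mul, mul_pow]
    gcongr ?_ * _
    have h1 : ‖1 / (2 * ↑π * Complex.I * (n:ℂ))‖ = 1 / (2 * π * |(n:ℝ)|) := by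
      rw [norm_div, norm_one]
      congr 1
      simp only [norm_mul, Complex.norm_I, Complex.norm_ofNat, Complex.norm_real,
        Real.norm_eq_abs, Complex.norm_intCast, abs_of_pos pi_pos]
      push_cast
      ring
    rw [h1]
    have hn1 : (1:ℝ) ≤ |(n:ℝ)| := by
      rw [← Int.cast_abs]
      exact_mod_cast Int.one_le_abs hn
    rw [div_pow, one_pow, div_pow, one_pow]
    apply div_le_div_of_nonneg_left one_pos.le (by positivity)
    rw [mul_pow]
    nlinarith [mul_nonneg (sub_nonneg.mpr hn1) (by positivity : (0:ℝ) ≤ |(n:ℝ)| + 1), mul_pos pi_pos pi_pos, pi_pos]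

lemma wirtinger_R (f : ℝ → ℝ) (hf : ContDiff ℝ 1 f) (hper : Function.Periodic f 1)
    (hmean : ∫ t in (0:ℝ)..1, f t = 0) :
    ∫ t in (0:ℝ)..1, f t ^ 2 ≤ (1 / (2 * π)) ^ 2 * ∫ t in (0:ℝ)..1, deriv f t ^ 2 := by
  set g : ℝ → ℂ := fun t => (f t : ℂ) with hg
  have hgc : ContDiff ℝ 1 g := Complex.ofRealCLM.contDiff.comp hf
  have hgper : Function.Periodic g 1 := fun t => by simp [hg, hper t]
  have hgd : deriv g = fun t => ((deriv f t : ℝ) : ℂ) := by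
    funext t
    exact (((hf.differentiable one_ne_zero).differentiableAt.hasDerivAt).ofReal_comp).deriv
  have hgmean : ∫ t in (0:ℝ)..1, g t = 0 := by
    rw [hg]
    rw [intervalIntegral.integral_ofReal, hmean, Complex.ofReal_zero]
  have key := wirtinger_C g hgc hgper hgmean
  rw [hgd] at key
  have e1 : ∀ (h : ℝ → ℝ), (∫ t in (0:ℝ)..1, ‖((h t : ℝ) : ℂ)‖ ^ 2) = ∫ t in (0:ℝ)..1, h t ^ 2 := by
    intro h
    apply intervalIntegral.integral_congr
    intro t _
    simp [Complex.norm_real, sq_abs]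
  rw [e1 f] at key
  calc ∫ t in (0:ℝ)..1, f t ^ 2 ≤ (1 / (2 * π)) ^ 2 * ∫ t in (0:ℝ)..1, ‖((deriv f t : ℝ) : ℂ)‖ ^ 2 := key
  _ = (1 / (2 * π)) ^ 2 * ∫ t in (0:ℝ)..1, deriv f t ^ 2 := by rw [e1 (deriv f)]

lemma countable_orthonormal {H : Type*} [NormedAddCommGroup H] [InnerProductSpace ℝ H]
    [TopologicalSpace.SeparableSpace H] {w : Set H} (hw : Orthonormal ℝ ((↑) : w → H)) :
    w.Countable := by
  obtain ⟨D, hDc, hDd⟩ := TopologicalSpace.exists_countable_dense H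
  have hsep : ∀ a : w, ∃ d ∈ D, dist (a : H) d < 1 / 2 := fun a =>
    hDd.exists_dist_lt (a : H) (by norm_num)
  choose φ hφD hφ using hsep
  have hinj : Function.Injective φ := by
    intro a b hab
    by_contra hne
    have h2 : dist (a : H) (b : H) ^ 2 = 2 := by
      rw [dist_eq_norm, norm_sub_sq_real, hw.1 a, hw.1 b, hw.2 hne]
      norm_num
    have hlt : dist (a : H) (b : H) < 1 := by
      calc dist (a : H) (b : H) ≤ dist (a : H) (φ a) + dist (φ a) (b : H) := dist_triangle _ _ _
      _ < 1 / 2 + 1 / 2 := by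
          refine add_lt_add (hφ a) ?_
          rw [hab, dist_comm]
          exact hφ b
      _ = 1 := by norm_num
    nlinarith [dist_nonneg (x := (a : H)) (y := (b : H))]
  haveI := hDc.to_subtype
  have : Function.Injective (fun a : w => (⟨φ a, hφD a⟩ : D)) := fun a b h => by
    apply hinj
    simpa using congrArg Subtype.val h
  exact Set.countable_coe_iff.mp this.countable

lemma integral_tsum_sq {ι : Type*} [Countable ι] (f : ι → ℝ → ℝ) (hf : ∀ i, Continuous (f i))
    (S : ℝ → ℝ) (hS : Continuous S) (hsum : ∀ t, HasSum (fun i => f i t ^ 2) (S t)) :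
    (Summable fun i => ∫ t in (0:ℝ)..1, f i t ^ 2) ∧
      ∫ t in (0:ℝ)..1, S t = ∑' i, ∫ t in (0:ℝ)..1, f i t ^ 2 := by
  have hSnn : ∀ t, 0 ≤ S t := fun t => (hsum t).nonneg fun i => sq_nonneg _
  have hSint : IntegrableOn S (Ioc (0:ℝ) 1) volume :=
    (hS.integrableOn_Icc (a := 0) (b := 1)).mono_set Ioc_subset_Icc_self
  have hfint : ∀ i, IntegrableOn (fun t => f i t ^ 2) (Ioc (0:ℝ) 1) volume := fun i =>
    (((hf i).pow 2).integrableOn_Icc (a := 0) (b := 1)).mono_set Ioc_subset_Icc_self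
  have key : ENNReal.ofReal (∫ t in Ioc (0:ℝ) 1, S t) =
      ∑' i, ENNReal.ofReal (∫ t in Ioc (0:ℝ) 1, f i t ^ 2) := by
    rw [MeasureTheory.ofReal_integral_eq_lintegral_ofReal hSint
      (Filter.Eventually.of_forall fun t => hSnn t)]
    have h1 : ∀ t : ℝ, ENNReal.ofReal (S t) = ∑' i, ENNReal.ofReal (f i t ^ 2) := by
      intro t
      rw [← (hsum t).tsum_eq]
      exact ENNReal.ofReal_tsum_of_nonneg (fun i => sq_nonneg _) (hsum t).summable
    calc ∫⁻ t in Ioc (0:ℝ) 1, ENNReal.ofReal (S t)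
        = ∫⁻ t in Ioc (0:ℝ) 1, ∑' i, ENNReal.ofReal (f i t ^ 2) := by
          exact lintegral_congr fun t => h1 t
      _ = ∑' i, ∫⁻ t in Ioc (0:ℝ) 1, ENNReal.ofReal (f i t ^ 2) :=
          lintegral_tsum fun i => (((hf i).pow 2).measurable.ennreal_ofReal).aemeasurable
      _ = ∑' i, ENNReal.ofReal (∫ t in Ioc (0:ℝ) 1, f i t ^ 2) := by
          refine tsum_congr fun i => ?_
          rw [MeasureTheory.ofReal_integral_eq_lintegral_ofReal (hfint i)
            (Filter.Eventually.of_forall fun t => sq_nonneg _)]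
  have hne : (∑' i, ENNReal.ofReal (∫ t in Ioc (0:ℝ) 1, f i t ^ 2)) ≠ ⊤ := by
    rw [← key]; exact ENNReal.ofReal_ne_top
  have hsummable : Summable fun i => ∫ t in (0:ℝ)..1, f i t ^ 2 := by
    have := ENNReal.summable_toReal hne
    refine this.congr fun i => ?_
    rw [ENNReal.toReal_ofReal (MeasureTheory.integral_nonneg fun t => sq_nonneg _),
      intervalIntegral.integral_of_le one_pos.le]
  refine ⟨hsummable, ?_⟩
  have := congrArg ENNReal.toReal key
  rw [ENNReal.toReal_ofReal (MeasureTheory.integral_nonneg fun t => hSnn t),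
    ENNReal.tsum_toReal_eq fun i => ENNReal.ofReal_ne_top] at this
  rw [intervalIntegral.integral_of_le one_pos.le, this]
  exact tsum_congr fun i => by
    rw [ENNReal.toReal_ofReal (MeasureTheory.integral_nonneg fun t => sq_nonneg _),
      intervalIntegral.integral_of_le one_pos.le]

open Real in
theorem stmt_7 {E : Type*} [NormedAddCommGroup E] [InnerProductSpace ℝ E]
    [CompleteSpace E] (x : ℝ → E)
    (hx : ContDiff ℝ 1 x) (hper : Function.Periodic x 1)
    (hmean : ∫ t in (0:ℝ)..1, x t = 0) :
    ∫ t in (0:ℝ)..1, ‖x t‖ ^ 2 ≤ (1 / (2 * π)) ^ 2 * ∫ t in (0:ℝ)..1, ‖deriv x t‖ ^ 2 := by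
  have hxc : Continuous x := hx.continuous
  have hx'c : Continuous (deriv x) := hx.continuous_deriv le_rfl
  have hper' : Function.Periodic (deriv x) 1 := periodic_deriv' x hper
  -- the separable closed subspace
  set F : Submodule ℝ E :=
    (Submodule.span ℝ (Set.range x ∪ Set.range (deriv x))).topologicalClosure with hF
  have hsepF : TopologicalSpace.IsSeparable (F : Set E) := by
    have h1 : TopologicalSpace.IsSeparable (Set.range x ∪ Set.range (deriv x)) :=
      (TopologicalSpace.isSeparable_range hxc).union (TopologicalSpace.isSeparable_range hx'c)
    exact h1.span.closure
  haveI : TopologicalSpace.SeparableSpace (↥F) := hsepF.separableSpace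
  haveI : CompleteSpace (↥F) :=
    (Submodule.isClosed_topologicalClosure _).completeSpace_coe
  have hmemx : ∀ t, x t ∈ F := fun t =>
    (Submodule.le_topologicalClosure _)
      (Submodule.subset_span (Set.mem_union_left _ ⟨t, rfl⟩))
  have hmemx' : ∀ t, deriv x t ∈ F := fun t =>
    (Submodule.le_topologicalClosure _)
      (Submodule.subset_span (Set.mem_union_right _ ⟨t, rfl⟩))
  -- a Hilbert basis of F, countable
  obtain ⟨w, b, hb⟩ := exists_hilbertBasis ℝ (↥F)
  have hwc : w.Countable := countable_orthonormal (hb ▸ b.orthonormal)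
  haveI := hwc.to_subtype
  -- coordinate functions
  set v : w → E := fun i => ((i : ↥F) : E) with hv
  set f : w → ℝ → ℝ := fun i t => inner ℝ (v i) (x t) with hf
  set g : w → ℝ → ℝ := fun i t => inner ℝ (v i) (deriv x t) with hg
  have hfC : ∀ i, ContDiff ℝ 1 (f i) := fun i =>
    (innerSL ℝ (v i)).contDiff.comp hx
  have hfd : ∀ i t, deriv (f i) t = g i t := by
    intro i t
    have hd : HasDerivAt x (deriv x t) t := (hx.differentiable one_ne_zero t).hasDerivAt
    exact (((innerSL ℝ (v i)).hasFDerivAt).comp_hasDerivAt t hd).deriv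
  have hfper : ∀ i, Function.Periodic (f i) 1 := fun i t => by simp [hf, hper t]
  have hfmean : ∀ i, ∫ t in (0:ℝ)..1, f i t = 0 := by
    intro i
    have hint : IntervalIntegrable x volume 0 1 := hxc.intervalIntegrable _ _
    have := (innerSL ℝ (v i)).intervalIntegral_comp_comm hint (a := 0) (b := 1)
    rw [hf]
    simp only [innerSL_apply_apply] at this ⊢
    rw [this, hmean]
    simp
  -- pointwise Parseval
  have hsumx : ∀ t, HasSum (fun i => f i t ^ 2) (‖x t‖ ^ 2) := by
    intro t
    have h1 := b.hasSum_inner_mul_inner (⟨x t, hmemx t⟩ : ↥F) (⟨x t, hmemx t⟩ : ↥F)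
    have h2 : ∀ i : w, (inner ℝ (⟨x t, hmemx t⟩ : ↥F) (b i) : ℝ) * inner ℝ (b i) (⟨x t, hmemx t⟩ : ↥F)
        = f i t ^ 2 := by
      intro i
      have hbi : (b i : ↥F) = (i : ↥F) := by rw [hb]
      have : (inner ℝ (b i) (⟨x t, hmemx t⟩ : ↥F) : ℝ) = f i t := by
        rw [hbi, hf]
        rfl
      have h2' : (inner ℝ (⟨x t, hmemx t⟩ : ↥F) (b i) : ℝ) = f i t := by
        rw [real_inner_comm]; exact this
      rw [h2', this, sq]
    have h3 : (inner ℝ (⟨x t, hmemx t⟩ : ↥F) (⟨x t, hmemx t⟩ : ↥F) : ℝ) = ‖x t‖ ^ 2 := by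
      rw [real_inner_self_eq_norm_sq]
      congr 1
    have heq : (fun i : w => (inner ℝ (⟨x t, hmemx t⟩ : ↥F) (b i) : ℝ) *
        inner ℝ (b i) (⟨x t, hmemx t⟩ : ↥F)) = fun i => f i t ^ 2 := funext h2
    rw [heq, h3] at h1
    exact h1
  have hsumx' : ∀ t, HasSum (fun i => g i t ^ 2) (‖deriv x t‖ ^ 2) := by
    intro t
    have h1 := b.hasSum_inner_mul_inner (⟨deriv x t, hmemx' t⟩ : ↥F) (⟨deriv x t, hmemx' t⟩ : ↥F)
    have h2 : ∀ i : w, (inner ℝ (⟨deriv x t, hmemx' t⟩ : ↥F) (b i) : ℝ) *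
        inner ℝ (b i) (⟨deriv x t, hmemx' t⟩ : ↥F) = g i t ^ 2 := by
      intro i
      have hbi : (b i : ↥F) = (i : ↥F) := by rw [hb]
      have : (inner ℝ (b i) (⟨deriv x t, hmemx' t⟩ : ↥F) : ℝ) = g i t := by
        rw [hbi, hg]
        rfl
      have h2' : (inner ℝ (⟨deriv x t, hmemx' t⟩ : ↥F) (b i) : ℝ) = g i t := by
        rw [real_inner_comm]; exact this
      rw [h2', this, sq]
    have h3 : (inner ℝ (⟨deriv x t, hmemx' t⟩ : ↥F) (⟨deriv x t, hmemx' t⟩ : ↥F) : ℝ)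
        = ‖deriv x t‖ ^ 2 := by
      rw [real_inner_self_eq_norm_sq]
      congr 1
    have heq : (fun i : w => (inner ℝ (⟨deriv x t, hmemx' t⟩ : ↥F) (b i) : ℝ) *
        inner ℝ (b i) (⟨deriv x t, hmemx' t⟩ : ↥F)) = fun i => g i t ^ 2 := funext h2
    rw [heq, h3] at h1
    exact h1
  -- swap integrals and sums
  have hfcont : ∀ i, Continuous (f i) := fun i => (hfC i).continuous
  have hgcont : ∀ i, Continuous (g i) := fun i => (innerSL ℝ (v i)).continuous.comp hx'c
  obtain ⟨hsumf, heqf⟩ := integral_tsum_sq f hfcont (fun t => ‖x t‖ ^ 2)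
    ((hxc.norm).pow 2) hsumx
  obtain ⟨hsumg, heqg⟩ := integral_tsum_sq g hgcont (fun t => ‖deriv x t‖ ^ 2)
    ((hx'c.norm).pow 2) hsumx'
  rw [heqf, heqg, ← tsum_mul_left]
  refine Summable.tsum_le_tsum (fun i => ?_) hsumf (hsumg.mul_left _)
  have := wirtinger_R (f i) (hfC i) (hfper i) (hfmean i)
  calc ∫ t in (0:ℝ)..1, f i t ^ 2
      ≤ (1 / (2 * π)) ^ 2 * ∫ t in (0:ℝ)..1, deriv (f i) t ^ 2 := this
    _ = (1 / (2 * π)) ^ 2 * ∫ t in (0:ℝ)..1, g i t ^ 2 := by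
        congr 1
        exact intervalIntegral.integral_congr fun t _ => by rw [hfd i t]
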